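/- Let I be an n×n symmetric negative definite matrix with integer entries whose off-diagonal entries are nonnegative, and fix r ∈ ℚⁿ. For x, y ∈ ℚⁿ write (x,y) := xᵀIy and x ≥ y for componentwise inequality, and let E_v denote the standard basis vectors. Then the set {x ∈ r + ℤⁿ : (x, E_v) ≤ 0 for all v} is nonempty and possesses a (unique) least element s(r), i.e., s(r) belongs to the set and s(r) ≤ x componentwise for every x in the set. -/

import Mathlib

open Matrix

/-- The intersection of the coset `r + ℤⁿ` with the Lipman cone of anti-nef cycles
has a unique least element. -/
theorem stmt_12
    (n : ℕ) (I : Matrix (Fin n) (Fin n) ℤ) (hsym : I.IsSymm)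
    (hoff : ∀ v w, v ≠ w → 0 ≤ I v w)
    (hnegdef : ∀ x : Fin n → ℚ, x ≠ 0 → x ⬝ᵥ (I.map ((↑) : ℤ → ℚ)).mulVec x < 0)
    (r : Fin n → ℚ) :
    ∃ s : Fin n → ℚ, IsLeast
      {x : Fin n → ℚ | (∀ v, ∃ k : ℤ, x v - r v = (k : ℚ)) ∧
        ∀ v, x ⬝ᵥ (I.map ((↑) : ℤ → ℚ)).mulVec (Pi.single v 1) ≤ 0} s := by
  classical
  set J : Matrix (Fin n) (Fin n) ℚ := I.map ((↑) : ℤ → ℚ) with hJdef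
  have Jsymm : ∀ v w, J v w = J w v := by
    intro v w
    simp only [hJdef, Matrix.map_apply]
    exact_mod_cast hsym.apply w v
  have Joff : ∀ v w, v ≠ w → 0 ≤ J v w := by
    intro v w h
    simp only [hJdef, Matrix.map_apply]
    exact_mod_cast hoff v w h
  -- the pairing against a basis vector equals a row of `J.mulVec`
  have key : ∀ (x : Fin n → ℚ) (v : Fin n),
      x ⬝ᵥ J.mulVec (Pi.single v 1) = (J.mulVec x) v := by
    intro x v
    rw [Matrix.mulVec_single]
    simp only [Matrix.mulVec, dotProduct]
    refine Finset.sum_congr rfl fun w _ => ?_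
    show x w * (J w v * 1) = J v w * x w
    rw [Jsymm v w, mul_one, mul_comm]
  -- reformulate the set
  have hsetS : {x : Fin n → ℚ | (∀ v, ∃ k : ℤ, x v - r v = (k : ℚ)) ∧
        ∀ v, x ⬝ᵥ J.mulVec (Pi.single v 1) ≤ 0} =
      {x : Fin n → ℚ | (∀ v, ∃ k : ℤ, x v - r v = (k : ℚ)) ∧
        ∀ v, (J.mulVec x) v ≤ 0} := by
    ext x
    simp only [Set.mem_setOf_eq, key]
  rw [hsetS]
  set S : Set (Fin n → ℚ) := {x : Fin n → ℚ | (∀ v, ∃ k : ℤ, x v - r v = (k : ℚ)) ∧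
        ∀ v, (J.mulVec x) v ≤ 0} with hSdef
  -- trivial case n = 0
  rcases Nat.eq_zero_or_pos n with rfl | hn
  · refine ⟨0, ⟨⟨fun v => v.elim0, fun v => v.elim0⟩, ?_⟩⟩
    intro x _
    intro v; exact v.elim0
  haveI : Nonempty (Fin n) := ⟨⟨0, hn⟩⟩
  -- negative definiteness consequences
  have hne : ∀ x : Fin n → ℚ, 0 ≤ x ⬝ᵥ J.mulVec x → x = 0 := by
    intro x hx
    by_contra h
    exact absurd hx (not_le.mpr (hnegdef x h))
  -- mulVec is injective, hence surjective
  have hinj : Function.Injective (Matrix.mulVecLin J) := by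
    rw [← LinearMap.ker_eq_bot, LinearMap.ker_eq_bot']
    intro x hx
    apply hne
    have : J.mulVec x = 0 := hx
    rw [this]
    simp
  have hsurj : Function.Surjective (Matrix.mulVecLin J) :=
    (LinearMap.injective_iff_surjective).mp hinj
  obtain ⟨y, hy⟩ := hsurj (fun _ => (-1 : ℚ))
  have hy' : J.mulVec y = fun _ => (-1 : ℚ) := hy
  -- clear denominators
  set D : ℕ := ∏ v : Fin n, (y v).den with hDdef
  have hDpos : 0 < D := Finset.prod_pos fun v _ => (y v).pos
  set z : Fin n → ℚ := fun v => (D : ℚ) * y v with hzdef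
  have hzint : ∀ v, ∃ k : ℤ, z v = (k : ℚ) := by
    intro v
    obtain ⟨c, hc⟩ := Finset.dvd_prod_of_mem (fun v => (y v).den) (Finset.mem_univ v)
    refine ⟨c * (y v).num, ?_⟩
    simp only [hzdef]
    rw [hDdef, hc]
    push_cast
    rw [← Rat.mul_den_eq_num]
    ring
  have hzneg : ∀ v, (J.mulVec z) v = -(D : ℚ) := by
    intro v
    have : J.mulVec z = (D : ℚ) • J.mulVec y := by
      rw [hzdef]
      have : (fun v => (D : ℚ) * y v) = (D : ℚ) • y := rfl
      rw [this, Matrix.mulVec_smul]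
    rw [this, hy']
    simp
  -- choose m large enough
  obtain ⟨m, hm⟩ := exists_nat_ge (Finset.univ.sup' Finset.univ_nonempty (fun v => (J.mulVec r) v))
  have hmv : ∀ v, (J.mulVec r) v ≤ (m : ℚ) :=
    fun v => le_trans (Finset.le_sup' _ (Finset.mem_univ v)) hm
  -- S is nonempty
  have hSne : S.Nonempty := by
    refine ⟨fun v => r v + (m : ℚ) * z v, ?_, ?_⟩
    · intro v
      obtain ⟨k, hk⟩ := hzint v
      exact ⟨m * k, by push_cast [hk]; ring⟩
    · intro v
      have : J.mulVec (fun v => r v + (m : ℚ) * z v) = J.mulVec r + (m : ℚ) • J.mulVec z := by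
        have h1 : (fun v => r v + (m : ℚ) * z v) = r + (m : ℚ) • z := rfl
        rw [h1, Matrix.mulVec_add, Matrix.mulVec_smul]
      rw [this]
      simp only [Pi.add_apply, Pi.smul_apply, smul_eq_mul, hzneg]
      have h2 : (m : ℚ) ≤ (m : ℚ) * D := by
        nlinarith [hDpos, Nat.one_le_cast (α := ℚ) |>.mpr hDpos, (Nat.cast_nonneg m : (0:ℚ) ≤ m)]
      nlinarith [hmv v]
  -- every element of S is nonnegative
  have hSnonneg : ∀ x ∈ S, ∀ v, 0 ≤ x v := by
    rintro x ⟨-, hx2⟩ v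
    set p : Fin n → ℚ := fun w => max (x w) 0 with hpdef
    set q : Fin n → ℚ := fun w => max (-x w) 0 with hqdef
    have hpq : p - x = q := by
      funext w
      simp only [hpdef, hqdef, Pi.sub_apply]
      rcases le_total (x w) 0 with h | h
      · rw [max_eq_right h, max_eq_left (by linarith)]; ring
      · rw [max_eq_left h, max_eq_right (by linarith)]; ring
    have hp0 : ∀ w, 0 ≤ p w := fun w => le_max_right _ _
    have hq0 : ∀ w, 0 ≤ q w := fun w => le_max_right _ _
    have hpq0 : ∀ w, p w * q w = 0 := by
      intro w
      simp only [hpdef, hqdef]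
      rcases le_total (x w) 0 with h | h
      · rw [max_eq_right h]; ring
      · rw [max_eq_right (by linarith : -x w ≤ 0)]; ring
    have hq : q = 0 := by
      apply hne
      have hdecomp : q ⬝ᵥ J.mulVec q = q ⬝ᵥ J.mulVec p - q ⬝ᵥ J.mulVec x := by
        rw [← dotProduct_sub, ← Matrix.mulVec_sub, hpq]
      rw [hdecomp]
      have h1 : 0 ≤ q ⬝ᵥ J.mulVec p := by
        simp only [dotProduct, Matrix.mulVec]
        apply Finset.sum_nonneg
        intro v' _
        rcases eq_or_lt_of_le (hq0 v') with h0 | h0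
        · rw [← h0]; ring_nf; simp
        · apply mul_nonneg (hq0 v')
          have hpv' : p v' = 0 := by
            have := hpq0 v'
            rcases mul_eq_zero.mp this with h | h
            · exact h
            · exact absurd h (ne_of_gt h0)
          apply Finset.sum_nonneg
          intro w _
          rcases eq_or_ne v' w with rfl | hvw
          · rw [hpv', mul_zero]
          · exact mul_nonneg (Joff v' w hvw) (hp0 w)
      have h2 : q ⬝ᵥ J.mulVec x ≤ 0 := by
        simp only [dotProduct]
        apply Finset.sum_nonpos
        intro w _
        exact mul_nonpos_of_nonneg_of_nonpos (hq0 w) (hx2 w)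
      linarith
    have : q v = 0 := by rw [hq]; rfl
    simp only [hqdef] at this
    by_contra h
    push_neg at h
    rw [max_eq_left (by linarith)] at this
    linarith
  -- S is closed under pointwise min
  have hmin : ∀ x ∈ S, ∀ y ∈ S, (fun w => min (x w) (y w)) ∈ S := by
    rintro x ⟨hx1, hx2⟩ y ⟨hy1, hy2⟩
    constructor
    · intro v
      dsimp only
      rcases le_total (x v) (y v) with h | h
      · rw [min_eq_left h]; exact hx1 v
      · rw [min_eq_right h]; exact hy1 v
    · intro v
      rcases le_total (x v) (y v) with h | h
      · refine le_trans ?_ (hx2 v)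
        simp only [Matrix.mulVec, dotProduct]
        apply Finset.sum_le_sum
        intro w _
        rcases eq_or_ne v w with rfl | hvw
        · rw [min_eq_left h]
        · exact mul_le_mul_of_nonneg_left (min_le_left _ _) (Joff v w hvw)
      · refine le_trans ?_ (hy2 v)
        simp only [Matrix.mulVec, dotProduct]
        apply Finset.sum_le_sum
        intro w _
        rcases eq_or_ne v w with rfl | hvw
        · rw [min_eq_right h]
        · exact mul_le_mul_of_nonneg_left (min_le_right _ _) (Joff v w hvw)
  -- for each coordinate, the set of possible integer offsets has a least element
  have hA : ∀ v : Fin n, ∃ kv : ℤ, (∃ x ∈ S, x v - r v = (kv : ℚ)) ∧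
      ∀ k : ℤ, (∃ x ∈ S, x v - r v = (k : ℚ)) → kv ≤ k := by
    intro v
    apply Int.exists_least_of_bdd (P := fun k => ∃ x ∈ S, x v - r v = (k : ℚ))
    · refine ⟨-Int.ceil (r v), ?_⟩
      rintro k ⟨x, hx, hk⟩
      have h0 := hSnonneg x hx v
      have h1 : (k : ℚ) ≥ -r v := by linarith
      have h2 : r v ≤ (Int.ceil (r v) : ℚ) := Int.le_ceil _
      have : ((-Int.ceil (r v) : ℤ) : ℚ) ≤ (k : ℚ) := by push_cast; linarith
      exact_mod_cast this
    · obtain ⟨x0, hx0⟩ := hSne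
      obtain ⟨k, hk⟩ := hx0.1 v
      exact ⟨k, x0, hx0, hk⟩
  choose kv hP hL using hA
  choose xv hxvS hxv using hP
  -- the pointwise infimum of a finite family in S stays in S
  have hfold : ∀ (t : Finset (Fin n)) (ht : t.Nonempty),
      (fun w => t.inf' ht fun u => xv u w) ∈ S := by
    intro t ht
    induction ht using Finset.Nonempty.cons_induction with
    | singleton a => simpa using hxvS a
    | cons a s h hs ih =>
        have heq : (fun w => (Finset.cons a s h).inf' (Finset.cons_nonempty h) fun u => xv u w)
            = fun w => min (xv a w) (s.inf' hs fun u => xv u w) := by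
          funext w
          rw [Finset.inf'_cons]
        rw [heq]
        exact hmin _ (hxvS a) _ ih
  refine ⟨fun w => Finset.univ.inf' Finset.univ_nonempty fun u => xv u w,
    hfold _ _, ?_⟩
  intro x hx
  rw [Pi.le_def]
  intro w
  have h1 : Finset.univ.inf' Finset.univ_nonempty (fun u => xv u w) ≤ xv w w :=
    Finset.inf'_le _ (Finset.mem_univ w)
  obtain ⟨k, hk⟩ := hx.1 w
  have h2 : kv w ≤ k := hL w k ⟨x, hx, hk⟩
  have h3 : xv w w = r w + (kv w : ℚ) := by linarith [hxv w]
  have h4 : ((kv w : ℚ)) ≤ (k : ℚ) := by exact_mod_cast h2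
  calc Finset.univ.inf' Finset.univ_nonempty (fun u => xv u w) ≤ xv w w := h1
    _ ≤ x w := by rw [h3]; linarith
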